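/- Let T and G be finite simple graphs with vertex sets V and W. A finite set σ ⊆ V × W is a face of Hom₊(T,G), i.e., for all (x,a), (y,b) ∈ σ, if x and y are adjacent in T then a and b are adjacent in G, if and only if σ is an independent set of the graph H on vertex set V × W in which (x,a) and (y,b) are adjacent exactly when x and y are adjacent in T and a and b are NOT adjacent in G (the case a = b included). In other words, Hom₊(T,G) is isomorphic to the independence complex Ind(T × ∁G), where ∁G is the strong complement of G. -/

import Mathlib

/-- The graph `T × ∁G` on the vertex set `V × W`: `(x,a)` and `(y,b)` are adjacent
iff `x` and `y` are adjacent in `T` while `a` and `b` are NOT adjacent in `G`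
(the case `a = b` included). This is the categorical product of `T` with the
strong complement of `G`. -/
def strongComplementProd {V W : Type*} (T : SimpleGraph V) (G : SimpleGraph W) :
    SimpleGraph (V × W) where
  Adj p q := T.Adj p.1 q.1 ∧ ¬ G.Adj p.2 q.2
  symm := by
    constructor
    rintro p q ⟨h1, h2⟩
    exact ⟨h1.symm, fun h => h2 h.symm⟩
  loopless := by
    constructor
    rintro p ⟨h1, -⟩
    exact T.loopless.irrefl _ h1

/-- **`Hom₊(T,G) ≅ Ind(T × ∁G)` (Proposition 2.4 / `pr:homp`).**
A finite set `σ ⊆ V × W` is a face of `Hom₊(T,G)` if and only if it is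
an independent set of the graph `T × ∁G`. -/
theorem cohomology_of_colorings_of_cycles_stmt5
    {V W : Type*} (T : SimpleGraph V) (G : SimpleGraph W)
    (σ : Finset (V × W)) :
    (∀ p ∈ σ, ∀ q ∈ σ, T.Adj p.1 q.1 → G.Adj p.2 q.2) ↔
    (∀ p ∈ σ, ∀ q ∈ σ, ¬ (strongComplementProd T G).Adj p q) := by
  constructor
  · intro h p hp q hq ⟨ha, hna⟩
    exact hna (h p hp q hq ha)
  · intro h p hp q hq ha
    by_contra hna
    exact h p hp q hq ⟨ha, hna⟩
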